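/- For positive co-prime integers m and n, the number of toroidal knot (m,n)-mosaics satisfies D_T^{(m,n)} = Σ_{p|m, q|n} d_{p,q}/(p·q), where the sum runs over all positive divisors p of m and q of n (in particular each d_{p,q} appearing is divisible by p·q). -/

import Mathlib

/-- Connection point on the left edge, for each of the eleven mosaic tiles `T_0, …, T_10`. -/
def cpL : Fin 11 → Bool := ![false, true, false, false, true, true, false, true, true, true, true]
/-- Connection point on the right edge. -/
def cpR : Fin 11 → Bool := ![false, false, true, true, false, true, false, true, true, true, true]
/-- Connection point on the top edge. -/
def cpT : Fin 11 → Bool := ![false, false, false, true, true, false, true, true, true, true, true]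
/-- Connection point on the bottom edge. -/
def cpB : Fin 11 → Bool := ![false, true, true, false, false, false, true, true, true, true, true]

/-- An `(m,n)`-mosaic: an `m × n` matrix of mosaic tiles (row `i`, column `j`). -/
abbrev Mosaic (m n : ℕ) := Fin m → Fin n → Fin 11

/-- Suitably connected: contiguous tiles agree about connection points on their common edge. -/
def SuitablyConnected {m n : ℕ} (M : Mosaic m n) : Prop :=
  (∀ (i : Fin m) (j : Fin n) (h : j.val + 1 < n),
      cpR (M i j) = cpL (M i ⟨j.val + 1, h⟩)) ∧
  (∀ (i : Fin m) (h : i.val + 1 < m) (j : Fin n),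
      cpB (M i j) = cpT (M ⟨i.val + 1, h⟩ j))

/-- Suitably ∂-connected: tiles on opposite ends of a row (resp. column) agree about
connection points on the outer boundary edges. -/
def SuitablyBdryConnected {m n : ℕ} (M : Mosaic m n) : Prop :=
  (∀ (i : Fin m) (j j' : Fin n), j.val = 0 → j'.val = n - 1 →
      cpL (M i j) = cpR (M i j')) ∧
  (∀ (i i' : Fin m) (j : Fin n), i.val = 0 → i'.val = m - 1 →
      cpT (M i j) = cpB (M i' j))

/-- A period knot `(m,n)`-mosaic. -/
def PeriodKnot {m n : ℕ} (M : Mosaic m n) : Prop :=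
  SuitablyConnected M ∧ SuitablyBdryConnected M

/-- `D_P^{(m,n)}`, the number of period knot `(m,n)`-mosaics. -/
noncomputable def DP (m n : ℕ) : ℕ := Nat.card {M : Mosaic m n // PeriodKnot M}

/-- No connection points on the boundary of the mosaic. -/
def BoundaryFree {m n : ℕ} (M : Mosaic m n) : Prop :=
  ∀ (i : Fin m) (j : Fin n),
    (j.val = 0 → cpL (M i j) = false) ∧ (j.val = n - 1 → cpR (M i j) = false) ∧
    (i.val = 0 → cpT (M i j) = false) ∧ (i.val = m - 1 → cpB (M i j) = false)

/-- `D^{(m,n)}`, the number of knot `(m,n)`-mosaics. -/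
noncomputable def DK (m n : ℕ) : ℕ :=
  Nat.card {M : Mosaic m n // SuitablyConnected M ∧ BoundaryFree M}

/-- Subtract `x` from the index `i`, modulo `m`. -/
def shiftIdx {m : ℕ} (x : ℤ) (i : Fin m) : Fin m :=
  ⟨(((i : ℤ) - x) % (m : ℤ)).toNat, by
    have hm : (0 : ℤ) < (m : ℤ) := by exact_mod_cast i.pos
    have h1 := Int.emod_lt_of_pos ((i : ℤ) - x) hm
    have h2 := Int.emod_nonneg ((i : ℤ) - x) (by omega : (m : ℤ) ≠ 0)
    omega⟩

/-- The cyclic rotation `t_{x,y}`: `(t_{x,y} M)_{i,j} = M_{i-x, j-y}` (indices mod `m`, `n`). -/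
def tshift {m n : ℕ} (x y : ℤ) (M : Mosaic m n) : Mosaic m n :=
  fun i j => M (shiftIdx x i) (shiftIdx y j)

/-- `M` is a `(p,q)`-f.period mosaic: `p` is the least positive integer with `M = t_{p,0}(M)`
and `q` is the least positive integer with `M = t_{0,q}(M)`. -/
def IsFPeriod {m n : ℕ} (p q : ℕ) (M : Mosaic m n) : Prop :=
  IsLeast {a : ℕ | 0 < a ∧ M = tshift (a : ℤ) 0 M} p ∧
  IsLeast {b : ℕ | 0 < b ∧ M = tshift 0 (b : ℤ) M} q

/-- `d_{p,q}`: the number of `(p,q)`-f.period knot `(m,n)`-mosaics. -/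
noncomputable def dFP (m n p q : ℕ) : ℕ :=
  Nat.card {M : Mosaic m n // PeriodKnot M ∧ IsFPeriod p q M}

/-- Equivalence of period knot mosaics under cyclic rotations of rows and columns. -/
def torRel (m n : ℕ) (A B : {M : Mosaic m n // PeriodKnot M}) : Prop :=
  ∃ x y : ℤ, tshift x y A.val = B.val

/-- `D_T^{(m,n)}`, the number of toroidal knot `(m,n)`-mosaics. -/
noncomputable def DT (m n : ℕ) : ℕ := Nat.card (Quot (torRel m n))

/-- `M` is a `p_{(k,1)}`-f.period knot `(p,p)`-mosaic: not `(1,1)`-f.period and `M = t_{k,1}(M)`. -/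
def IsPk1FPeriod {p : ℕ} (k : ℕ) (M : Mosaic p p) : Prop :=
  ¬ IsFPeriod 1 1 M ∧ M = tshift (k : ℤ) 1 M

/-- `d_{p_{(k,1)}}`: the number of `p_{(k,1)}`-f.period knot `(p,p)`-mosaics. -/
noncomputable def dPk (p k : ℕ) : ℕ :=
  Nat.card {M : Mosaic p p // PeriodKnot M ∧ IsPk1FPeriod k M}

/-- `d_{p²}`: the number of period knot `(p,p)`-mosaics that are not `(1,1)`-, not `(1,p)`-
and not `p_{(k,1)}`-f.period for any `k`. -/
noncomputable def dPsq (p : ℕ) : ℕ :=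
  Nat.card {M : Mosaic p p // PeriodKnot M ∧ ¬ IsFPeriod 1 1 M ∧ ¬ IsFPeriod 1 p M ∧
    ∀ k < p, ¬ IsPk1FPeriod k M}

/-- Entries of the pair `(X_k, O_k)` of `2^k × 2^k` matrices defined by the block recursion
`X_{k+1} = [[X_k, O_k], [O_k, X_k]]`, `O_{k+1} = [[O_k, X_k], [X_k, 4 O_k]]`,
seeded with `X_0 = O_0 = [1]` (the most significant bit selects the block). -/
def matsXO : ℕ → ℕ → ℕ → ℕ × ℕ
  | 0, _, _ => (1, 1)
  | k + 1, i, j =>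
    let v := matsXO k (i % 2 ^ k) (j % 2 ^ k)
    if i / 2 ^ k % 2 = 0 then
      if j / 2 ^ k % 2 = 0 then (v.1, v.2) else (v.2, v.1)
    else
      if j / 2 ^ k % 2 = 0 then (v.2, v.1) else (v.1, 4 * v.2)

/-- The matrix `X_k`. -/
def Xmat (m : ℕ) : Matrix (Fin (2 ^ m)) (Fin (2 ^ m)) ℕ :=
  Matrix.of fun i j => (matsXO m i j).1

/-- The matrix `O_k`. -/
def Omat (m : ℕ) : Matrix (Fin (2 ^ m)) (Fin (2 ^ m)) ℕ :=
  Matrix.of fun i j => (matsXO m i j).2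

/-- Entries of the quadruple `(X_k^+, X_k^-, O_k^+, O_k^-)` of `2^k × 2^k` matrices defined by
the block recursions `X_{k+1}^+ = [[X_k^+, O_k^-],[O_k^-, X_k^+]]`,
`X_{k+1}^- = [[X_k^-, O_k^+],[O_k^+, X_k^-]]`, `O_{k+1}^+ = [[O_k^+, X_k^-],[X_k^-, 4 O_k^+]]`,
`O_{k+1}^- = [[O_k^-, X_k^+],[X_k^+, 4 O_k^-]]`, seeded with `X_0^+ = O_0^+ = [1]`,
`X_0^- = O_0^- = [0]` (the most significant bit selects the block). -/
def matsPM : ℕ → ℕ → ℕ → ℕ × ℕ × ℕ × ℕ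
  | 0, _, _ => (1, 0, 1, 0)
  | k + 1, i, j =>
    let v := matsPM k (i % 2 ^ k) (j % 2 ^ k)
    match v with
    | (xp, xm, op, om) =>
      if i / 2 ^ k % 2 = 0 then
        if j / 2 ^ k % 2 = 0 then (xp, xm, op, om) else (om, op, xm, xp)
      else
        if j / 2 ^ k % 2 = 0 then (om, op, xm, xp) else (xp, xm, 4 * op, 4 * om)

/-- The matrix `X_m^+`. -/
def Xplus (m : ℕ) : Matrix (Fin (2 ^ m)) (Fin (2 ^ m)) ℕ :=
  Matrix.of fun i j => (matsPM m i j).1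
/-- The matrix `X_m^-`. -/
def Xminus (m : ℕ) : Matrix (Fin (2 ^ m)) (Fin (2 ^ m)) ℕ :=
  Matrix.of fun i j => (matsPM m i j).2.1
/-- The matrix `O_m^+`. -/
def Oplus (m : ℕ) : Matrix (Fin (2 ^ m)) (Fin (2 ^ m)) ℕ :=
  Matrix.of fun i j => (matsPM m i j).2.2.1
/-- The matrix `O_m^-`. -/
def Ominus (m : ℕ) : Matrix (Fin (2 ^ m)) (Fin (2 ^ m)) ℕ :=
  Matrix.of fun i j => (matsPM m i j).2.2.2

/-- The boundary state (a word in `{o,x}^m`) encoded by `a : Fin (2^m)` in reverse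
lexicographic order: the first position is the least significant bit. -/
def stateOf {m : ℕ} (a : Fin (2 ^ m)) : Fin m → Bool := fun r => (a : ℕ).testBit r.val

/-- The `l`-state of a mosaic. -/
def lState {m n : ℕ} (hn : 0 < n) (M : Mosaic m n) : Fin m → Bool :=
  fun i => cpL (M i ⟨0, hn⟩)
/-- The `r`-state of a mosaic. -/
def rState {m n : ℕ} (hn : 0 < n) (M : Mosaic m n) : Fin m → Bool :=
  fun i => cpR (M i ⟨n - 1, Nat.sub_lt hn Nat.one_pos⟩)
/-- The `t`-state of a mosaic. -/
def tState {m n : ℕ} (hm : 0 < m) (M : Mosaic m n) : Fin n → Bool :=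
  fun j => cpT (M ⟨0, hm⟩ j)
/-- The `b`-state of a mosaic. -/
def bState {m n : ℕ} (hm : 0 < m) (M : Mosaic m n) : Fin n → Bool :=
  fun j => cpB (M ⟨m - 1, Nat.sub_lt hm Nat.one_pos⟩ j)

/-- The state matrix `N^{(m,n)+}`: its `(a,b)` entry counts the suitably connected
`(m,n)`-mosaics whose `t`-state equals its `b`-state, whose `l`-state is the `a`-th state
and whose `r`-state is the `b`-th state. -/
noncomputable def Nplus (m n : ℕ) (hm : 0 < m) (hn : 0 < n) :
    Matrix (Fin (2 ^ m)) (Fin (2 ^ m)) ℕ :=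
  Matrix.of fun a b => Nat.card {M : Mosaic m n // SuitablyConnected M ∧
    tState hm M = bState hm M ∧ lState hn M = stateOf a ∧ rState hn M = stateOf b}

/-- The index map `α` for `tr^{(k)}`: cyclic shift by `k` positions of the `p`-bit binary
representation, i.e. `α(i) ≡ 2^k i (mod 2^p - 1)` for `0 < i < 2^p - 1`, `α(0) = 0`,
`α(2^p-1) = 2^p-1`. -/
def alphaIdx (p k : ℕ) (i : Fin (2 ^ p)) : Fin (2 ^ p) :=
  if h : (i : ℕ) = 2 ^ p - 1 then i
  else ⟨(2 ^ k * (i : ℕ)) % (2 ^ p - 1), by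
    have h1 : 0 < 2 ^ p := Nat.two_pow_pos p
    have h2 : (i : ℕ) < 2 ^ p := i.isLt
    have h3 : 0 < 2 ^ p - 1 := by omega
    have h4 := Nat.mod_lt (2 ^ k * (i : ℕ)) h3
    omega⟩

/-- The twisted trace `tr^{(k)}(A) = Σ_i A_{i+1, α(i)+1}`. -/
def trk (p k : ℕ) (A : Matrix (Fin (2 ^ p)) (Fin (2 ^ p)) ℕ) : ℕ :=
  ∑ i, A i (alphaIdx p k i)


section Aux
variable {m n : ℕ}

lemma fin_ext_int {i j : Fin m} (h : ((i : ℕ) : ℤ) = ((j : ℕ) : ℤ)) : i = j :=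
  Fin.ext (by exact_mod_cast h)

lemma shiftIdx_coe (x : ℤ) (i : Fin m) :
    (((shiftIdx x i : Fin m) : ℕ) : ℤ) = (((i:ℕ):ℤ) - x) % (m:ℤ) := by
  simp only [shiftIdx]
  exact Int.toNat_of_nonneg (Int.emod_nonneg _ (by exact_mod_cast i.pos.ne'))

lemma emod_sub_left (a b c : ℤ) : (a % c - b) % c = (a - b) % c := by
  rw [Int.sub_emod, Int.emod_emod_of_dvd _ dvd_rfl, ← Int.sub_emod]

lemma shiftIdx_shiftIdx (x y : ℤ) (i : Fin m) :
    shiftIdx x (shiftIdx y i) = shiftIdx (x + y) i := by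
  apply fin_ext_int
  rw [shiftIdx_coe, shiftIdx_coe, shiftIdx_coe, emod_sub_left]
  ring_nf

lemma shiftIdx_emod (x : ℤ) (i : Fin m) : shiftIdx (x % (m:ℤ)) i = shiftIdx x i := by
  apply fin_ext_int
  rw [shiftIdx_coe, shiftIdx_coe, Int.sub_emod, Int.emod_emod_of_dvd _ dvd_rfl, ← Int.sub_emod]

lemma shiftIdx_zero (i : Fin m) : shiftIdx 0 i = i := by
  apply fin_ext_int
  rw [shiftIdx_coe, sub_zero, Int.emod_eq_of_lt (by positivity) (by exact_mod_cast i.isLt)]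

lemma shiftIdx_self (i : Fin m) : shiftIdx (m : ℤ) i = i := by
  have : shiftIdx ((m : ℤ) % (m:ℤ)) i = shiftIdx (m:ℤ) i := shiftIdx_emod _ i
  rw [Int.emod_self] at this
  rw [← this, shiftIdx_zero]

lemma tshift_tshift (x y x' y' : ℤ) (M : Mosaic m n) :
    tshift x y (tshift x' y' M) = tshift (x' + x) (y' + y) M := by
  funext i j
  simp [tshift, shiftIdx_shiftIdx]

lemma tshift_zero (M : Mosaic m n) : tshift 0 0 M = M := by
  funext i j; simp [tshift, shiftIdx_zero]

lemma tshift_injective (x y : ℤ) : Function.Injective (tshift x y : Mosaic m n → Mosaic m n) := by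
  intro A B h
  have := congrArg (tshift (-x) (-y)) h
  rwa [tshift_tshift, tshift_tshift, add_neg_cancel, add_neg_cancel, tshift_zero, tshift_zero]
    at this

lemma tshift_m_zero (M : Mosaic m n) : tshift (m : ℤ) 0 M = M := by
  funext i j; simp [tshift, shiftIdx_self, shiftIdx_zero]

lemma tshift_zero_n (M : Mosaic m n) : tshift 0 (n : ℤ) M = M := by
  funext i j; simp [tshift, shiftIdx_self, shiftIdx_zero]

lemma tshift_emod (x y : ℤ) (M : Mosaic m n) :
    tshift (x % (m:ℤ)) (y % (n:ℤ)) M = tshift x y M := by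
  funext i j; simp [tshift, shiftIdx_emod]

/-- closure of the fixing set under integer multiples -/
lemma fix_zsmul {x y : ℤ} {M : Mosaic m n} (h : tshift x y M = M) (k : ℤ) :
    tshift (k * x) (k * y) M = M := by
  induction k using Int.induction_on with
  | zero => simpa using tshift_zero M
  | succ k ih =>
      have : tshift x y (tshift (k * x) (k * y) M) = M := by rw [ih, h]
      rw [tshift_tshift] at this
      convert this using 2 <;> ring
  | pred k ih =>
      have hneg : tshift (-x) (-y) M = M := by
        apply tshift_injective x y
        rw [tshift_tshift, neg_add_cancel, neg_add_cancel, tshift_zero, h]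
      have : tshift (-x) (-y) (tshift (-k * x) (-k * y) M) = M := by rw [ih, hneg]
      rw [tshift_tshift] at this
      convert this using 2 <;> ring

lemma fix_sub {a b c d : ℤ} {M : Mosaic m n} (h1 : tshift a b M = M) (h2 : tshift c d M = M) :
    tshift (a - c) (b - d) M = M := by
  apply tshift_injective c d
  rw [tshift_tshift]
  have : a - c + c = a := by ring
  rw [this]
  have : b - d + d = b := by ring
  rw [this, h1, h2]

end Aux
section Cyc
variable {m n : ℕ}

/-- cyclic successor via shiftIdx (-1) -/
lemma shiftIdx_neg_one_coe (j : Fin n) :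
    ((shiftIdx (-1) j : Fin n) : ℕ) = ((j : ℕ) + 1) % n := by
  have h := shiftIdx_coe (-1) j
  have : (((j:ℕ):ℤ) - (-1)) % (n:ℤ) = (((j:ℕ) + 1 : ℕ) : ℤ) % ((n:ℕ):ℤ) := by
    push_cast; ring_nf
  rw [this] at h
  have h2 : ((((j:ℕ) + 1) % n : ℕ) : ℤ) = (((j:ℕ) + 1 : ℕ) : ℤ) % ((n:ℕ):ℤ) := by
    push_cast; rfl
  rw [← h2] at h
  exact_mod_cast h

lemma shiftIdx_neg_one_lt (j : Fin n) (h : (j : ℕ) + 1 < n) :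
    shiftIdx (-1) j = ⟨(j:ℕ) + 1, h⟩ := by
  apply Fin.ext
  rw [shiftIdx_neg_one_coe]
  exact Nat.mod_eq_of_lt h

lemma shiftIdx_neg_one_last (j : Fin n) (h : (j : ℕ) = n - 1) :
    shiftIdx (-1) j = ⟨0, j.pos⟩ := by
  apply Fin.ext
  rw [shiftIdx_neg_one_coe]
  have hn : 0 < n := j.pos
  have : (j:ℕ) + 1 = n := by omega
  simp [this]

/-- cyclic connectivity -/
def CycConn (M : Mosaic m n) : Prop :=
  (∀ (i : Fin m) (j : Fin n), cpR (M i j) = cpL (M i (shiftIdx (-1) j))) ∧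
  (∀ (i : Fin m) (j : Fin n), cpB (M i j) = cpT (M (shiftIdx (-1) i) j))

lemma periodKnot_iff_cycConn (M : Mosaic m n) : PeriodKnot M ↔ CycConn M := by
  constructor
  · rintro ⟨⟨sc1, sc2⟩, ⟨bd1, bd2⟩⟩
    constructor
    · intro i j
      by_cases h : (j : ℕ) + 1 < n
      · rw [shiftIdx_neg_one_lt j h]; exact sc1 i j h
      · have hj : (j : ℕ) = n - 1 := by have := j.isLt; omega
        rw [shiftIdx_neg_one_last j hj]
        exact (bd1 i ⟨0, j.pos⟩ j rfl hj).symm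
    · intro i j
      by_cases h : (i : ℕ) + 1 < m
      · rw [shiftIdx_neg_one_lt i h]; exact sc2 i h j
      · have hi : (i : ℕ) = m - 1 := by have := i.isLt; omega
        rw [shiftIdx_neg_one_last i hi]
        exact (bd2 ⟨0, i.pos⟩ i j rfl hi).symm
  · rintro ⟨c1, c2⟩
    refine ⟨⟨?_, ?_⟩, ⟨?_, ?_⟩⟩
    · intro i j h
      have := c1 i j
      rwa [shiftIdx_neg_one_lt j h] at this
    · intro i h j
      have := c2 i j
      rwa [shiftIdx_neg_one_lt i h] at this
    · intro i j j' h0 h1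
      have := c1 i j'
      rw [shiftIdx_neg_one_last j' h1] at this
      have hj : j = ⟨0, j.pos⟩ := Fin.ext h0
      rw [hj]
      exact this.symm
    · intro i i' j h0 h1
      have := c2 i' j
      rw [shiftIdx_neg_one_last i' h1] at this
      have hi : i = ⟨0, i.pos⟩ := Fin.ext h0
      rw [hi]
      exact this.symm
end Cyc
section Per
variable {m n : ℕ}

lemma cycConn_tshift {M : Mosaic m n} (h : CycConn M) (x y : ℤ) : CycConn (tshift x y M) := by
  obtain ⟨c1, c2⟩ := h
  constructor
  · intro i j
    show cpR (M (shiftIdx x i) (shiftIdx y j)) = cpL (M (shiftIdx x i) (shiftIdx y (shiftIdx (-1) j)))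
    rw [shiftIdx_shiftIdx, add_comm, ← shiftIdx_shiftIdx]
    exact c1 (shiftIdx x i) (shiftIdx y j)
  · intro i j
    show cpB (M (shiftIdx x i) (shiftIdx y j)) = cpT (M (shiftIdx x (shiftIdx (-1) i)) (shiftIdx y j))
    rw [shiftIdx_shiftIdx, add_comm, ← shiftIdx_shiftIdx]
    exact c2 (shiftIdx x i) (shiftIdx y j)

lemma periodKnot_tshift {M : Mosaic m n} (h : PeriodKnot M) (x y : ℤ) :
    PeriodKnot (tshift x y M) :=
  (periodKnot_iff_cycConn _).mpr (cycConn_tshift ((periodKnot_iff_cycConn _).mp h) x y)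

/-- the row period -/
noncomputable def per1 (M : Mosaic m n) : ℕ := sInf {a : ℕ | 0 < a ∧ M = tshift (a:ℤ) 0 M}
/-- the column period -/
noncomputable def per2 (M : Mosaic m n) : ℕ := sInf {b : ℕ | 0 < b ∧ M = tshift 0 (b:ℤ) M}

lemma isLeast_per1 (hm : 0 < m) (M : Mosaic m n) :
    IsLeast {a : ℕ | 0 < a ∧ M = tshift (a:ℤ) 0 M} (per1 M) :=
  ⟨Nat.sInf_mem ⟨m, hm, (tshift_m_zero M).symm⟩, fun _ hb => Nat.sInf_le hb⟩

lemma isLeast_per2 (hn : 0 < n) (M : Mosaic m n) :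
    IsLeast {b : ℕ | 0 < b ∧ M = tshift 0 (b:ℤ) M} (per2 M) :=
  ⟨Nat.sInf_mem ⟨n, hn, (tshift_zero_n M).symm⟩, fun _ hb => Nat.sInf_le hb⟩

lemma isFPeriod_iff (hm : 0 < m) (hn : 0 < n) (p q : ℕ) (M : Mosaic m n) :
    IsFPeriod p q M ↔ per1 M = p ∧ per2 M = q := by
  constructor
  · rintro ⟨h1, h2⟩
    exact ⟨(isLeast_per1 hm M).unique h1, (isLeast_per2 hn M).unique h2⟩
  · rintro ⟨rfl, rfl⟩
    exact ⟨isLeast_per1 hm M, isLeast_per2 hn M⟩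

lemma per1_dvd_iff {M : Mosaic m n} {p : ℕ}
    (hp : IsLeast {a : ℕ | 0 < a ∧ M = tshift (a:ℤ) 0 M} p) (x : ℤ) :
    tshift x 0 M = M ↔ (p:ℤ) ∣ x := by
  have hppos : 0 < p := hp.1.1
  constructor
  · intro h
    have hfixp : tshift (p:ℤ) 0 M = M := hp.1.2.symm
    have hmul : tshift ((x / p) * (p:ℤ)) 0 M = M := by
      have := fix_zsmul hfixp (x / (p:ℤ))
      simpa using this
    have hr : tshift (x % (p:ℤ)) 0 M = M := by
      have := fix_sub h hmul
      rw [sub_zero] at this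
      have he : x - x / (p:ℤ) * (p:ℤ) = x % (p:ℤ) := by rw [Int.emod_def]; ring
      rwa [he] at this
    by_contra hdvd
    have hne : x % (p:ℤ) ≠ 0 := fun h0 => hdvd (Int.dvd_of_emod_eq_zero h0)
    have h0 : 0 ≤ x % (p:ℤ) := Int.emod_nonneg x (by exact_mod_cast hppos.ne')
    have hlt : x % (p:ℤ) < (p:ℤ) := Int.emod_lt_of_pos x (by exact_mod_cast hppos)
    set r := (x % (p:ℤ)).toNat with hrdef
    have hrc : ((r:ℕ):ℤ) = x % (p:ℤ) := Int.toNat_of_nonneg h0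
    have hrmem : r ∈ {a : ℕ | 0 < a ∧ M = tshift (a:ℤ) 0 M} := by
      refine ⟨?_, by rw [hrc]; exact hr.symm⟩
      omega
    have := hp.2 hrmem
    omega
  · rintro ⟨k, rfl⟩
    have := fix_zsmul (hp.1.2.symm) k
    simpa [mul_comm] using this

lemma per2_dvd_iff {M : Mosaic m n} {q : ℕ}
    (hq : IsLeast {b : ℕ | 0 < b ∧ M = tshift 0 (b:ℤ) M} q) (y : ℤ) :
    tshift 0 y M = M ↔ (q:ℤ) ∣ y := by
  have hqpos : 0 < q := hq.1.1
  constructor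
  · intro h
    have hfixq : tshift 0 (q:ℤ) M = M := hq.1.2.symm
    have hmul : tshift 0 ((y / q) * (q:ℤ)) M = M := by
      have := fix_zsmul hfixq (y / (q:ℤ))
      simpa using this
    have hr : tshift 0 (y % (q:ℤ)) M = M := by
      have := fix_sub h hmul
      rw [sub_zero] at this
      have he : y - y / (q:ℤ) * (q:ℤ) = y % (q:ℤ) := by rw [Int.emod_def]; ring
      rwa [he] at this
    by_contra hdvd
    have hne : y % (q:ℤ) ≠ 0 := fun h0 => hdvd (Int.dvd_of_emod_eq_zero h0)
    have h0 : 0 ≤ y % (q:ℤ) := Int.emod_nonneg y (by exact_mod_cast hqpos.ne')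
    have hlt : y % (q:ℤ) < (q:ℤ) := Int.emod_lt_of_pos y (by exact_mod_cast hqpos)
    set r := (y % (q:ℤ)).toNat with hrdef
    have hrc : ((r:ℕ):ℤ) = y % (q:ℤ) := Int.toNat_of_nonneg h0
    have hrmem : r ∈ {b : ℕ | 0 < b ∧ M = tshift 0 (b:ℤ) M} := by
      refine ⟨?_, by rw [hrc]; exact hr.symm⟩
      omega
    have := hq.2 hrmem
    omega
  · rintro ⟨k, rfl⟩
    have := fix_zsmul (hq.1.2.symm) k
    simpa [mul_comm] using this

lemma per1_dvd (hm : 0 < m) (M : Mosaic m n) : per1 M ∣ m := by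
  have := (per1_dvd_iff (isLeast_per1 hm M) (m:ℤ)).mp (tshift_m_zero M)
  exact_mod_cast this

lemma per2_dvd (hn : 0 < n) (M : Mosaic m n) : per2 M ∣ n := by
  have := (per2_dvd_iff (isLeast_per2 hn M) (n:ℤ)).mp (tshift_zero_n M)
  exact_mod_cast this

/-- the stabilizer splits, using coprimality -/
lemma stab_split (hm : 0 < m) (hn : 0 < n) (hco : Nat.Coprime m n) (M : Mosaic m n)
    (x y : ℤ) :
    tshift x y M = M ↔ ((per1 M : ℤ) ∣ x ∧ (per2 M : ℤ) ∣ y) := by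
  have hp := isLeast_per1 hm M
  have hq := isLeast_per2 hn M
  constructor
  · intro h
    have hnxy : tshift ((n:ℤ) * x) ((n:ℤ) * y) M = M := fix_zsmul h (n:ℤ)
    have hny : tshift ((n:ℤ) * x) 0 M = M := by
      have h1 : tshift ((n:ℤ) * x % (m:ℤ)) (((n:ℤ) * y) % (n:ℤ)) M
          = tshift ((n:ℤ) * x) ((n:ℤ) * y) M := tshift_emod _ _ M
      have h2 : ((n:ℤ) * y) % (n:ℤ) = 0 := Int.mul_emod_right _ _
      have h3 : tshift ((n:ℤ) * x % (m:ℤ)) 0 M = M := by rw [← h2, h1, hnxy]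
      have h4 : tshift ((n:ℤ) * x % (m:ℤ)) 0 M = tshift ((n:ℤ) * x) 0 M := by
        have := tshift_emod ((n:ℤ) * x) 0 M
        rwa [Int.zero_emod] at this
      rw [← h4, h3]
    have hpnx : (per1 M : ℤ) ∣ (n:ℤ) * x := (per1_dvd_iff hp _).mp hny
    have hcop : IsCoprime ((per1 M : ℕ) : ℤ) ((n:ℕ) : ℤ) := by
      rw [Int.isCoprime_iff_gcd_eq_one]
      have : Nat.Coprime (per1 M) n := Nat.Coprime.coprime_dvd_left (per1_dvd hm M) hco
      simpa [Int.gcd_natCast_natCast] using this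
    have hpx : (per1 M : ℤ) ∣ x := hcop.dvd_of_dvd_mul_left hpnx
    have hx0 : tshift x 0 M = M := (per1_dvd_iff hp x).mpr hpx
    have hy0 : tshift 0 y M = M := by
      have : tshift 0 y (tshift x 0 M) = tshift x y M := by
        rw [tshift_tshift]; norm_num
      rw [hx0, h] at this
      rw [this]
    exact ⟨hpx, (per2_dvd_iff hq y).mp hy0⟩
  · rintro ⟨hx, hy⟩
    have hx0 : tshift x 0 M = M := (per1_dvd_iff hp x).mpr hx
    have hy0 : tshift 0 y M = M := (per2_dvd_iff hq y).mpr hy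
    have : tshift 0 y (tshift x 0 M) = tshift x y M := by
      rw [tshift_tshift]; norm_num
    rw [hx0, hy0] at this
    rw [← this]
end Per
section Count
variable {m n : ℕ}

lemma per1_tshift (x y : ℤ) (M : Mosaic m n) : per1 (tshift x y M) = per1 M := by
  unfold per1
  congr 1
  ext a
  have h1 : tshift (a:ℤ) 0 (tshift x y M) = tshift x y (tshift (a:ℤ) 0 M) := by
    rw [tshift_tshift, tshift_tshift]
    ring_nf
  constructor
  · rintro ⟨ha, h⟩
    rw [h1] at h
    exact ⟨ha, tshift_injective x y h⟩
  · rintro ⟨ha, h⟩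
    refine ⟨ha, ?_⟩
    rw [h1, ← h]

lemma per2_tshift (x y : ℤ) (M : Mosaic m n) : per2 (tshift x y M) = per2 M := by
  unfold per2
  congr 1
  ext a
  have h1 : tshift 0 (a:ℤ) (tshift x y M) = tshift x y (tshift 0 (a:ℤ) M) := by
    rw [tshift_tshift, tshift_tshift]
    ring_nf
  constructor
  · rintro ⟨ha, h⟩
    rw [h1] at h
    exact ⟨ha, tshift_injective x y h⟩
  · rintro ⟨ha, h⟩
    refine ⟨ha, ?_⟩
    rw [h1, ← h]

lemma torRel_equivalence : Equivalence (torRel m n) := by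
  constructor
  · intro A; exact ⟨0, 0, tshift_zero A.1⟩
  · rintro A B ⟨x, y, h⟩
    refine ⟨-x, -y, ?_⟩
    rw [← h, tshift_tshift]
    simp [tshift_zero]
  · rintro A B C ⟨x, y, h⟩ ⟨x', y', h'⟩
    refine ⟨x + x', y + y', ?_⟩
    rw [← h', ← h, tshift_tshift]

lemma quot_mk_eq_iff (A B : {M : Mosaic m n // PeriodKnot M}) :
    Quot.mk (torRel m n) A = Quot.mk (torRel m n) B ↔ torRel m n A B :=
  Quot.eq.trans (Equivalence.eqvGen_iff torRel_equivalence)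

lemma card_fiber (hm : 0 < m) (hn : 0 < n) (hco : Nat.Coprime m n)
    (M0 : {M : Mosaic m n // PeriodKnot M}) :
    Nat.card {M : {M : Mosaic m n // PeriodKnot M} // torRel m n M0 M}
      = per1 M0.1 * per2 M0.1 := by
  set p := per1 M0.1 with hpdef
  set q := per2 M0.1 with hqdef
  have hppos : 0 < p := (isLeast_per1 hm M0.1).1.1
  have hqpos : 0 < q := (isLeast_per2 hn M0.1).1.1
  set g : Fin p × Fin q → {M : {M : Mosaic m n // PeriodKnot M} // torRel m n M0 M} :=
    fun z => ⟨⟨tshift ((z.1 : ℕ) : ℤ) ((z.2 : ℕ) : ℤ) M0.1,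
      periodKnot_tshift M0.2 _ _⟩, ⟨_, _, rfl⟩⟩ with hg
  have hbij : Function.Bijective g := by
    constructor
    · rintro ⟨z1, z2⟩ ⟨z1', z2'⟩ h
      have hval : tshift ((z1:ℕ):ℤ) ((z2:ℕ):ℤ) M0.1 = tshift ((z1':ℕ):ℤ) ((z2':ℕ):ℤ) M0.1 := by
        have := congrArg (fun w => w.1.1) h
        exact this
      have hfix : tshift (((z1:ℕ):ℤ) - ((z1':ℕ):ℤ)) (((z2:ℕ):ℤ) - ((z2':ℕ):ℤ)) M0.1 = M0.1 := by
        apply tshift_injective ((z1':ℕ):ℤ) ((z2':ℕ):ℤ)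
        rw [tshift_tshift]
        have e1 : ((z1:ℕ):ℤ) - ((z1':ℕ):ℤ) + ((z1':ℕ):ℤ) = ((z1:ℕ):ℤ) := by ring
        have e2 : ((z2:ℕ):ℤ) - ((z2':ℕ):ℤ) + ((z2':ℕ):ℤ) = ((z2:ℕ):ℤ) := by ring
        rw [e1, e2, hval]
      obtain ⟨hd1, hd2⟩ := (stab_split hm hn hco M0.1 _ _).mp hfix
      have hz1 : ((z1:ℕ):ℤ) - ((z1':ℕ):ℤ) = 0 := by
        apply Int.eq_zero_of_abs_lt_dvd hd1
        have b1 : ((z1:ℕ):ℤ) < (p:ℤ) := by exact_mod_cast z1.isLt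
        have b2 : ((z1':ℕ):ℤ) < (p:ℤ) := by exact_mod_cast z1'.isLt
        have b3 : (0:ℤ) ≤ ((z1:ℕ):ℤ) := by positivity
        have b4 : (0:ℤ) ≤ ((z1':ℕ):ℤ) := by positivity
        rw [abs_lt]; omega
      have hz2 : ((z2:ℕ):ℤ) - ((z2':ℕ):ℤ) = 0 := by
        apply Int.eq_zero_of_abs_lt_dvd hd2
        have b1 : ((z2:ℕ):ℤ) < (q:ℤ) := by exact_mod_cast z2.isLt
        have b2 : ((z2':ℕ):ℤ) < (q:ℤ) := by exact_mod_cast z2'.isLt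
        have b3 : (0:ℤ) ≤ ((z2:ℕ):ℤ) := by positivity
        have b4 : (0:ℤ) ≤ ((z2':ℕ):ℤ) := by positivity
        rw [abs_lt]; omega
      have : z1 = z1' := by
        apply fin_ext_int; omega
      have h2 : z2 = z2' := by
        apply fin_ext_int; omega
      simp [this, h2]
    · rintro ⟨M, x, y, hxy⟩
      have hpnz : ((p:ℕ):ℤ) ≠ 0 := by exact_mod_cast hppos.ne'
      have hqnz : ((q:ℕ):ℤ) ≠ 0 := by exact_mod_cast hqpos.ne'
      have hx0 : 0 ≤ x % (p:ℤ) := Int.emod_nonneg x hpnz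
      have hxlt : x % (p:ℤ) < (p:ℤ) := Int.emod_lt_of_pos x (by exact_mod_cast hppos)
      have hy0 : 0 ≤ y % (q:ℤ) := Int.emod_nonneg y hqnz
      have hylt : y % (q:ℤ) < (q:ℤ) := Int.emod_lt_of_pos y (by exact_mod_cast hqpos)
      refine ⟨(⟨(x % (p:ℤ)).toNat, by omega⟩, ⟨(y % (q:ℤ)).toNat, by omega⟩), ?_⟩
      apply Subtype.ext
      apply Subtype.ext
      show tshift (((x % (p:ℤ)).toNat : ℕ) : ℤ) (((y % (q:ℤ)).toNat : ℕ) : ℤ) M0.1 = M.1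
      rw [Int.toNat_of_nonneg hx0, Int.toNat_of_nonneg hy0]
      have hfix : tshift (x - x % (p:ℤ)) (y - y % (q:ℤ)) M0.1 = M0.1 := by
        apply (stab_split hm hn hco M0.1 _ _).mpr
        constructor
        · exact Int.dvd_self_sub_of_emod_eq rfl
        · exact Int.dvd_self_sub_of_emod_eq rfl
      calc tshift (x % (p:ℤ)) (y % (q:ℤ)) M0.1
          = tshift (x % (p:ℤ)) (y % (q:ℤ)) (tshift (x - x % (p:ℤ)) (y - y % (q:ℤ)) M0.1) := by
            rw [hfix]
        _ = tshift x y M0.1 := by rw [tshift_tshift]; ring_nf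
        _ = M.1 := hxy
  rw [← Nat.card_congr (Equiv.ofBijective g hbij)]
  simp [Nat.card_eq_fintype_card]

end Count
/-- For positive co-prime integers `m` and `n`,
`D_T^{(m,n)} = Σ_{p|m, q|n} d_{p,q}/(p·q)`; in particular each `d_{p,q}` appearing is
divisible by `p·q`. -/
theorem toroidal_knot_mosaic_enumeration (m n : ℕ) (hm : 0 < m) (hn : 0 < n)
    (hco : Nat.Coprime m n) :
    (∀ p ∈ m.divisors, ∀ q ∈ n.divisors, p * q ∣ dFP m n p q) ∧
    DT m n = ∑ p ∈ m.divisors, ∑ q ∈ n.divisors, dFP m n p q / (p * q) := by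
  classical
  haveI : Fintype {M : Mosaic m n // PeriodKnot M} := Fintype.ofFinite _
  haveI : Fintype (Quot (torRel m n)) := Fintype.ofFinite _
  -- the lifted period map on the quotient
  set P : Quot (torRel m n) → ℕ × ℕ :=
    Quot.lift (fun M : {M : Mosaic m n // PeriodKnot M} => (per1 M.1, per2 M.1)) (by
      rintro A B ⟨x, y, h⟩
      show (per1 A.1, per2 A.1) = (per1 B.1, per2 B.1)
      rw [← h, per1_tshift, per2_tshift]) with hPdef
  have hPmk : ∀ M : {M : Mosaic m n // PeriodKnot M},
      P (Quot.mk (torRel m n) M) = (per1 M.1, per2 M.1) := fun _ => rfl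
  have hcardsub : ∀ (pred : {M : Mosaic m n // PeriodKnot M} → Prop),
      Nat.card {M : {M : Mosaic m n // PeriodKnot M} // pred M}
        = (Finset.univ.filter pred).card := by
    intro pred
    rw [Nat.card_eq_fintype_card, Fintype.card_subtype]
  -- cardinality of each equivalence class
  have hclass : ∀ (M0 : {M : Mosaic m n // PeriodKnot M}),
      (Finset.univ.filter (fun M : {M : Mosaic m n // PeriodKnot M} =>
        Quot.mk (torRel m n) M = Quot.mk (torRel m n) M0)).card = per1 M0.1 * per2 M0.1 := by
    intro M0
    rw [← hcardsub, ← card_fiber hm hn hco M0]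
    apply Nat.card_congr
    apply Equiv.subtypeEquivRight
    intro M
    rw [quot_mk_eq_iff]
    exact ⟨torRel_equivalence.symm, torRel_equivalence.symm⟩
  -- dFP in terms of the number of classes with given period pair
  have hdFP : ∀ p q : ℕ, dFP m n p q
      = (Finset.univ.filter (fun c : Quot (torRel m n) => P c = (p, q))).card * (p * q) := by
    intro p q
    have e : {M : Mosaic m n // PeriodKnot M ∧ IsFPeriod p q M}
        ≃ {M : {M : Mosaic m n // PeriodKnot M} // per1 M.1 = p ∧ per2 M.1 = q} :=
      { toFun := fun M => ⟨⟨M.1, M.2.1⟩, (isFPeriod_iff hm hn p q M.1).mp M.2.2⟩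
        invFun := fun M => ⟨M.1.1, M.1.2, (isFPeriod_iff hm hn p q M.1.1).mpr M.2⟩
        left_inv := fun M => rfl
        right_inv := fun M => rfl }
    have h1 : dFP m n p q = (Finset.univ.filter
        (fun M : {M : Mosaic m n // PeriodKnot M} => per1 M.1 = p ∧ per2 M.1 = q)).card := by
      rw [dFP, Nat.card_congr e, hcardsub]
      congr!
    have hmem : ∀ M : {M : Mosaic m n // PeriodKnot M},
        M ∈ Finset.univ.filter
          (fun M : {M : Mosaic m n // PeriodKnot M} => per1 M.1 = p ∧ per2 M.1 = q) →
        Quot.mk (torRel m n) M ∈ Finset.univ.filter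
          (fun c : Quot (torRel m n) => P c = (p, q)) := by
      intro M hM
      rw [Finset.mem_filter] at hM ⊢
      rw [hPmk]
      exact ⟨Finset.mem_univ _, Prod.ext hM.2.1 hM.2.2⟩
    rw [h1, Finset.card_eq_sum_card_fiberwise hmem]
    apply Finset.sum_const_nat
    intro c hc
    obtain ⟨M0, rfl⟩ := Quot.exists_rep c
    rw [Finset.mem_filter, hPmk] at hc
    have hp0 : per1 M0.1 = p := congrArg Prod.fst hc.2
    have hq0 : per2 M0.1 = q := congrArg Prod.snd hc.2
    have hfeq : Finset.filter
          (fun M : {M : Mosaic m n // PeriodKnot M} =>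
            Quot.mk (torRel m n) M = Quot.mk (torRel m n) M0)
          (Finset.univ.filter
            (fun M : {M : Mosaic m n // PeriodKnot M} => per1 M.1 = p ∧ per2 M.1 = q))
        = Finset.univ.filter (fun M : {M : Mosaic m n // PeriodKnot M} =>
            Quot.mk (torRel m n) M = Quot.mk (torRel m n) M0) := by
      ext M
      simp only [Finset.mem_filter, Finset.mem_univ, true_and]
      constructor
      · rintro ⟨_, h⟩; exact h
      · intro h
        refine ⟨⟨?_, ?_⟩, h⟩
        · obtain ⟨x, y, hxy⟩ := (quot_mk_eq_iff M M0).mp h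
          rw [← hp0, ← hxy, per1_tshift]
        · obtain ⟨x, y, hxy⟩ := (quot_mk_eq_iff M M0).mp h
          rw [← hq0, ← hxy, per2_tshift]
    rw [hfeq, hclass M0, hp0, hq0]
  -- DT in terms of class counts
  have hDT : DT m n = ∑ z ∈ m.divisors ×ˢ n.divisors,
      (Finset.univ.filter (fun c : Quot (torRel m n) => P c = z)).card := by
    rw [DT, Nat.card_eq_fintype_card, ← Finset.card_univ]
    apply Finset.card_eq_sum_card_fiberwise (f := P)
    intro c _
    induction c using Quot.ind with
    | _ M =>
      rw [Finset.mem_coe, Finset.mem_product, hPmk]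
      constructor
      · exact Nat.mem_divisors.mpr ⟨per1_dvd hm M.1, hm.ne'⟩
      · exact Nat.mem_divisors.mpr ⟨per2_dvd hn M.1, hn.ne'⟩
  constructor
  · intro p hp q hq
    rw [hdFP p q]
    exact dvd_mul_left _ _
  · rw [hDT, Finset.sum_product]
    apply Finset.sum_congr rfl
    intro p hp
    apply Finset.sum_congr rfl
    intro q hq
    rw [hdFP p q, Nat.mul_div_cancel]
    exact Nat.mul_pos (Nat.pos_of_mem_divisors hp) (Nat.pos_of_mem_divisors hq)
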